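/- Let χ be a real primitive Dirichlet character modulo q, let χ₀ be the principal Dirichlet character modulo q, and let r, t be positive integers with gcd(rt, 6) = 1. Then for every complex w with Re w > 1, ∑_{n=1}^∞ μ²(n) χ₀(n) a(n) f_r(n) f_t(n) n^(-w) = ζ(w) L(w, χ) Q(w) P_{r,t}(w). -/

import Mathlib

open Complex
open scoped ArithmeticFunction
open scoped ArithmeticFunction.Moebius ArithmeticFunction.omega

/-- f(n) = μ(n) 2^(-ω(n)) n. -/
noncomputable def pseudoChar (n : ℕ) : ℝ := (μ n : ℝ) * n / 2 ^ (ω n)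

/-- f_r(n) = f(gcd(n, r)). -/
noncomputable def pseudoCharAt (r n : ℕ) : ℝ := pseudoChar (Nat.gcd n r)

/-- Q(w) = ∏_{χ(p)=1} (1 - 3p^{-2w} + 2p^{-3w}) ∏_{χ(p)=-1} (1 - p^{-2w}) ∏_{p∣q} (1 - p^{-w}). -/
noncomputable def Qfun {q : ℕ} (χ : DirichletCharacter ℂ q) (w : ℂ) : ℂ :=
  (∏' p : Nat.Primes,
      if χ (p : ℕ) = 1 then
        1 - 3 * ((p : ℕ) : ℂ) ^ (-2 * w) + 2 * ((p : ℕ) : ℂ) ^ (-3 * w)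
      else 1) *
  (∏' p : Nat.Primes, if χ (p : ℕ) = -1 then 1 - ((p : ℕ) : ℂ) ^ (-2 * w) else 1) *
  (∏' p : Nat.Primes, if (p : ℕ) ∣ q then 1 - ((p : ℕ) : ℂ) ^ (-w) else 1)

/-- P_{r,t}(w) = ∏_{χ(p)=1, p ∣ rt} (1 + 2 f_r(p) f_t(p) p^{-w}) / (1 + 2p^{-w}). -/
noncomputable def Prt {q : ℕ} (χ : DirichletCharacter ℂ q) (r t : ℕ) (w : ℂ) : ℂ :=
  ∏ p ∈ (r * t).primeFactors.filter (fun p : ℕ => χ (p : ZMod q) = 1),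
    (1 + 2 * (pseudoCharAt r p : ℂ) * (pseudoCharAt t p : ℂ) * (p : ℂ) ^ (-w)) /
      (1 + 2 * (p : ℂ) ^ (-w))

/- ### Auxiliary lemmas -/

open scoped ArithmeticFunction.zeta

lemma omega_eq (n : ℕ) : ω n = n.primeFactors.card := by
  rw [ArithmeticFunction.cardDistinctFactors_apply, Nat.primeFactors, List.card_toFinset]

lemma pseudoChar_one : pseudoChar 1 = 1 := by
  simp [pseudoChar, omega_eq]

lemma pseudoChar_mul {a b : ℕ} (h : a.Coprime b) :
    pseudoChar (a * b) = pseudoChar a * pseudoChar b := by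
  rcases eq_or_ne a 0 with rfl | ha
  · have : b = 1 := by simpa [Nat.coprime_zero_left] using h
    simp [this, pseudoChar]
  rcases eq_or_ne b 0 with rfl | hb
  · have : a = 1 := by simpa [Nat.coprime_zero_right] using h
    simp [this, pseudoChar]
  have hμ : μ (a * b) = μ a * μ b :=
    ArithmeticFunction.isMultiplicative_moebius.map_mul_of_coprime h
  have hω : ω (a * b) = ω a + ω b := by
    rw [omega_eq, omega_eq, omega_eq, Nat.Coprime.primeFactors_mul h,
      Finset.card_union_of_disjoint (Nat.Coprime.disjoint_primeFactors h)]
  rw [pseudoChar, pseudoChar, pseudoChar, hμ, hω, pow_add]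
  push_cast
  ring

lemma abs_pseudoChar_le (n : ℕ) : |pseudoChar n| ≤ n := by
  rw [pseudoChar, abs_div, abs_mul]
  have h1 : |(μ n : ℝ)| ≤ 1 := by
    rw [← Int.cast_abs]
    exact_mod_cast ArithmeticFunction.abs_moebius_le_one (n := n)
  have h2 : (1:ℝ) ≤ |(2:ℝ) ^ (ω n)| := by
    rw [_root_.abs_pow, _root_.abs_two]
    exact one_le_pow₀ one_le_two
  calc |(μ n : ℝ)| * |(n:ℝ)| / |(2:ℝ)^(ω n)| ≤ 1 * |(n:ℝ)| / 1 := by gcongr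
      _ = (n:ℝ) := by simp

lemma pseudoCharAt_one (r : ℕ) : pseudoCharAt r 1 = 1 := by
  rw [pseudoCharAt, Nat.gcd_one_left, pseudoChar_one]

lemma pseudoCharAt_mul (r : ℕ) {m n : ℕ} (h : m.Coprime n) :
    pseudoCharAt r (m * n) = pseudoCharAt r m * pseudoCharAt r n := by
  have hco : (m.gcd r).Coprime (n.gcd r) :=
    Nat.Coprime.coprime_dvd_left (Nat.gcd_dvd_left m r)
      (Nat.Coprime.coprime_dvd_right (Nat.gcd_dvd_left n r) h)
  rw [pseudoCharAt, pseudoCharAt, pseudoCharAt, Nat.gcd_comm (m*n) r,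
    Nat.Coprime.gcd_mul r h, Nat.gcd_comm r m, Nat.gcd_comm r n, pseudoChar_mul hco]

lemma pseudoCharAt_eq_one_of_not_dvd {p r : ℕ} (hp : p.Prime) (h : ¬ p ∣ r) :
    pseudoCharAt r p = 1 := by
  have : Nat.gcd p r = 1 := (Nat.Prime.coprime_iff_not_dvd hp).mpr h
  rw [pseudoCharAt, this, pseudoChar_one]

lemma abs_pseudoCharAt_le {r : ℕ} (hr : 0 < r) (n : ℕ) : |pseudoCharAt r n| ≤ r := by
  refine (abs_pseudoChar_le _).trans ?_
  exact_mod_cast Nat.le_of_dvd hr (Nat.gcd_dvd_right n r)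

lemma one_add_ne_zero' {z : ℂ} (h : ‖z‖ < 1) : 1 + z ≠ 0 := by
  intro hc
  have hz : z = -1 := by linear_combination hc
  rw [hz] at h
  norm_num at h

lemma mult_one_add (u : Nat.Primes → ℂ) (hu : Summable u) (h : ∀ p, 1 + u p ≠ 0) :
    Multipliable (fun p => 1 + u p) := by
  exact Complex.multipliable_one_add_of_summable hu

lemma sum_divisors_char_mul {q : ℕ} (χ : DirichletCharacter ℂ q) {m n : ℕ}
    (h : Nat.Coprime m n) :
    ∑ d ∈ (m*n).divisors, χ (d : ZMod q) =
      (∑ d ∈ m.divisors, χ (d : ZMod q)) * (∑ d ∈ n.divisors, χ (d : ZMod q)) := by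
  classical
  let χA : ArithmeticFunction ℂ := ⟨fun k => if k = 0 then 0 else χ (k : ZMod q), by simp⟩
  have hχA : χA.IsMultiplicative := by
    constructor
    · simp [χA]
    · intro a b hab
      rcases eq_or_ne a 0 with rfl | ha
      · simp [χA]
      rcases eq_or_ne b 0 with rfl | hb
      · simp [χA]
      simp only [χA, ArithmeticFunction.coe_mk, if_neg ha, if_neg hb,
        if_neg (mul_ne_zero ha hb)]
      push_cast
      rw [map_mul]
  have key : ∀ k : ℕ, ((↑ζ * χA : ArithmeticFunction ℂ)) k = ∑ d ∈ k.divisors, χ (d : ZMod q) := by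
    intro k
    rw [ArithmeticFunction.coe_zeta_mul_apply]
    refine Finset.sum_congr rfl fun d hd => ?_
    have hd0 : d ≠ 0 := (Nat.pos_of_mem_divisors hd).ne'
    simp [χA, hd0]
  have hA : (↑ζ * χA : ArithmeticFunction ℂ).IsMultiplicative :=
    (ArithmeticFunction.isMultiplicative_zeta.natCast).mul hχA
  rw [← key, ← key, ← key, hA.map_mul_of_coprime h]

lemma norm_inv_rpow_lt_half {P : ℕ} (hP : 2 ≤ P) {c : ℝ} (hc : 1 < c) :
    ((P:ℝ)^c)⁻¹ < 1/2 := by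
  have h1 : (2:ℝ) < 2^c := by
    calc (2:ℝ) = 2^(1:ℝ) := (Real.rpow_one 2).symm
    _ < 2^c := Real.rpow_lt_rpow_of_exponent_lt one_lt_two hc
  have h2 : (2:ℝ)^c ≤ (P:ℝ)^c :=
    Real.rpow_le_rpow (by norm_num) (by exact_mod_cast hP) (by linarith)
  rw [inv_lt_comm₀ (by positivity) (by norm_num)]
  linarith

lemma summable_primes_rpow {c : ℝ} (hc : 1 < c) :
    Summable (fun p : Nat.Primes => ((p:ℕ):ℝ) ^ (-c)) := by
  have h := Real.summable_nat_rpow (p := -c) |>.mpr (by linarith)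
  exact h.comp_injective Nat.Primes.coe_nat_injective

/-- For Re w > 1,
∑ₙ μ²(n) χ₀(n) a(n) f_r(n) f_t(n) n^{-w} = ζ(w) L(w,χ) Q(w) P_{r,t}(w). -/
theorem euler_product_identity (q : ℕ) [NeZero q] (χ : DirichletCharacter ℂ q)
    (hreal : ∀ n : ℕ, (χ n).im = 0) (hprim : χ.IsPrimitive)
    (r t : ℕ) (hr : 0 < r) (ht : 0 < t) (hrt6 : Nat.gcd (r * t) 6 = 1)
    (w : ℂ) (hw : 1 < w.re) :
    ∑' n : ℕ, ((μ n : ℂ) ^ 2 * ((1 : DirichletCharacter ℂ q) n) *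
        (∑ d ∈ n.divisors, χ (d : ZMod q)) *
        (pseudoCharAt r n : ℂ) * (pseudoCharAt t n : ℂ) * (n : ℂ) ^ (-w)) =
      riemannZeta w * χ.LFunction w * Qfun χ w * Prt χ r t w := by
  set g : ℕ → ℂ := fun n => (μ n : ℂ) ^ 2 * ((1 : DirichletCharacter ℂ q) n) *
        (∑ d ∈ n.divisors, χ (d : ZMod q)) *
        (pseudoCharAt r n : ℂ) * (pseudoCharAt t n : ℂ) * (n : ℂ) ^ (-w) with hgdef
  have hg1 : g 1 = 1 := by
    simp [hgdef, pseudoCharAt_one]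
  have hg0 : g 0 = 0 := by
    simp [hgdef]
  have hmul : ∀ {m n : ℕ}, Nat.Coprime m n → g (m * n) = g m * g n := by
    intro m n h
    rcases eq_or_ne m 0 with rfl | hm
    · have : n = 1 := by simpa [Nat.coprime_zero_left] using h
      simp [this, hg0, hg1]
    rcases eq_or_ne n 0 with rfl | hn
    · have : m = 1 := by simpa [Nat.coprime_zero_right] using h
      simp [this, hg0, hg1]
    have hμ : (μ (m * n) : ℂ) = (μ m : ℂ) * (μ n : ℂ) := by
      exact_mod_cast congrArg (fun z : ℤ => (z : ℂ))
        (ArithmeticFunction.isMultiplicative_moebius.map_mul_of_coprime h)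
    have hχ₀ : ((1 : DirichletCharacter ℂ q) ((m*n : ℕ) : ZMod q)) =
        ((1 : DirichletCharacter ℂ q) (m : ZMod q)) *
        ((1 : DirichletCharacter ℂ q) (n : ZMod q)) := by
      push_cast
      rw [map_mul]
    have hcp : ((m*n : ℕ) : ℂ) ^ (-w) = (m:ℂ)^(-w) * (n:ℂ)^(-w) := by
      have := mul_cpow_ofReal_nonneg (Nat.cast_nonneg m) (Nat.cast_nonneg n) (-w)
      push_cast at this ⊢
      exact this
    simp only [hgdef]
    rw [hμ, hχ₀, hcp, sum_divisors_char_mul χ h, pseudoCharAt_mul r h, pseudoCharAt_mul t h]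
    push_cast
    ring
  -- Summability
  have hσ : (1:ℝ) < w.re := hw
  have hsum : Summable (fun n => ‖g n‖) := by
    have hσc : (1:ℝ) < ((w.re : ℂ)).re := by simpa using hσ
    have hζs : LSeriesSummable (fun n => ((↑ζ : ArithmeticFunction ℂ) n)) ((w.re : ℂ)) :=
      ArithmeticFunction.LSeriesSummable_zeta_iff.mpr hσc
    have hF : LSeriesSummable (fun n => ((↑ζ * ↑ζ : ArithmeticFunction ℂ) n)) ((w.re:ℂ)) :=
      ArithmeticFunction.LSeriesSummable_mul hζs hζs
    set B : ℕ → ℝ := fun n =>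
      (LSeries.term (fun k => ((↑ζ * ↑ζ : ArithmeticFunction ℂ) k)) ((w.re:ℂ)) n).re with hBdef
    have hBsum : Summable B := Complex.reCLM.summable hF
    have hbound : ∀ n, ‖g n‖ ≤ (r*t : ℝ) * B n := by
      intro n
      rcases eq_or_ne n 0 with rfl | hn
      · simp [hg0, hBdef, LSeries.term_zero]
      have hnpos : 0 < n := Nat.pos_of_ne_zero hn
      have hFn : ((↑ζ * ↑ζ : ArithmeticFunction ℂ)) n = (n.divisors.card : ℂ) := by
        rw [ArithmeticFunction.coe_zeta_mul_apply]
        have hone : ∀ d ∈ n.divisors, ((↑ζ : ArithmeticFunction ℂ)) d = 1 := fun d hd => by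
          rw [ArithmeticFunction.natCoe_apply,
            ArithmeticFunction.zeta_apply_ne (Nat.pos_of_mem_divisors hd).ne', Nat.cast_one]
        rw [Finset.sum_congr rfl hone, Finset.sum_const, nsmul_eq_mul, mul_one]
      have hcpow : ((n:ℂ)) ^ ((w.re :ℂ)) = (((n:ℝ) ^ w.re : ℝ) : ℂ) := by
        rw [Complex.ofReal_cpow (Nat.cast_nonneg n)]
        norm_cast
      have hBn : B n = (n.divisors.card : ℝ) / (n:ℝ)^w.re := by
        rw [hBdef]
        simp only
        rw [LSeries.term_of_ne_zero hn, hFn, hcpow, ← Complex.ofReal_natCast,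
          ← Complex.ofReal_div, Complex.ofReal_re]
      have h1 : ‖(μ n:ℂ)^2‖ ≤ 1 := by
        rw [norm_pow]
        have : ‖(μ n : ℂ)‖ ≤ 1 := by
          rw [Complex.norm_intCast, ← Int.cast_abs]
          exact_mod_cast ArithmeticFunction.abs_moebius_le_one (n := n)
        calc ‖(μ n : ℂ)‖^2 ≤ 1^2 := by gcongr
          _ = 1 := one_pow 2
      have h2 : ‖(1 : DirichletCharacter ℂ q) (n : ZMod q)‖ ≤ 1 :=
        (1 : DirichletCharacter ℂ q).norm_le_one _
      have h3 : ‖∑ d ∈ n.divisors, χ (d : ZMod q)‖ ≤ (n.divisors.card : ℝ) := by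
        refine (norm_sum_le _ _).trans ?_
        calc ∑ d ∈ n.divisors, ‖χ (d : ZMod q)‖ ≤ ∑ d ∈ n.divisors, 1 :=
              Finset.sum_le_sum (fun d _ => χ.norm_le_one _)
          _ = (n.divisors.card : ℝ) := by simp
      have h4 : ‖((pseudoCharAt r n : ℝ) : ℂ)‖ ≤ (r : ℝ) := by
        rw [Complex.norm_real]
        exact abs_pseudoCharAt_le hr n
      have h5 : ‖((pseudoCharAt t n : ℝ) : ℂ)‖ ≤ (t : ℝ) := by
        rw [Complex.norm_real]
        exact abs_pseudoCharAt_le ht n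
      have h6 : ‖(n:ℂ)^(-w)‖ = ((n:ℝ)^w.re)⁻¹ := by
        rw [norm_natCast_cpow_of_pos hnpos, neg_re, Real.rpow_neg (Nat.cast_nonneg n)]
      rw [hBn, hgdef]
      simp only [norm_mul]
      calc ‖(μ n:ℂ)^2‖ * ‖(1 : DirichletCharacter ℂ q) (n : ZMod q)‖ *
            ‖∑ d ∈ n.divisors, χ (d : ZMod q)‖ * ‖((pseudoCharAt r n : ℝ) : ℂ)‖ *
            ‖((pseudoCharAt t n : ℝ) : ℂ)‖ * ‖(n:ℂ)^(-w)‖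
          ≤ 1 * 1 * (n.divisors.card : ℝ) * r * t * ((n:ℝ)^w.re)⁻¹ := by
            rw [h6]; gcongr
        _ = (r*t:ℝ) * ((n.divisors.card : ℝ) / (n:ℝ)^w.re) := by ring
    exact Summable.of_nonneg_of_le (fun n => norm_nonneg _) hbound (hBsum.mul_left _)
  have hG : HasProd (fun p : Nat.Primes => ∑' e : ℕ, g ((p : ℕ) ^ e)) (∑' n, g n) :=
    EulerProduct.eulerProduct_hasProd hg1 hmul hsum hg0
  -- local factors
  set Zf : Nat.Primes → ℂ := fun p => (1 - (p : ℂ) ^ (-w))⁻¹ with hZfdef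
  set Lf : Nat.Primes → ℂ := fun p => (1 - χ p * (p : ℂ) ^ (-w))⁻¹ with hLfdef
  set Q1f : Nat.Primes → ℂ := fun p =>
    if χ (p : ℕ) = 1 then 1 - 3 * ((p : ℕ) : ℂ) ^ (-2 * w) + 2 * ((p : ℕ) : ℂ) ^ (-3 * w) else 1
    with hQ1fdef
  set Q2f : Nat.Primes → ℂ := fun p =>
    if χ (p : ℕ) = -1 then 1 - ((p : ℕ) : ℂ) ^ (-2 * w) else 1 with hQ2fdef
  set Q3f : Nat.Primes → ℂ := fun p =>
    if (p : ℕ) ∣ q then 1 - ((p : ℕ) : ℂ) ^ (-w) else 1 with hQ3fdef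
  set S := (r * t).primeFactors.filter (fun p : ℕ => χ (p : ZMod q) = 1) with hSdef
  set Pf : Nat.Primes → ℂ := fun p => if (p:ℕ) ∈ S then
      (1 + 2 * (pseudoCharAt r (p:ℕ) : ℂ) * (pseudoCharAt t (p:ℕ) : ℂ) * ((p:ℕ) : ℂ) ^ (-w)) /
      (1 + 2 * ((p:ℕ) : ℂ) ^ (-w)) else 1 with hPfdef
  -- norm facts
  have hxn : ∀ p : Nat.Primes, ‖((p:ℕ):ℂ)^(-w)‖ = (((p:ℕ):ℝ)^w.re)⁻¹ := fun p => by
    rw [norm_natCast_cpow_of_pos p.prop.pos, neg_re, Real.rpow_neg (Nat.cast_nonneg _)]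
  have hxhalf : ∀ p : Nat.Primes, ‖((p:ℕ):ℂ)^(-w)‖ < 1/2 := fun p => by
    rw [hxn p]; exact norm_inv_rpow_lt_half p.prop.two_le hσ
  have hX2 : ∀ p : Nat.Primes, ((p:ℕ):ℂ)^(-2*w) = (((p:ℕ):ℂ)^(-w))^2 := fun p => by
    rw [show (-2*w : ℂ) = ((2:ℕ):ℂ)*(-w) by push_cast; ring, Complex.cpow_nat_mul]
  have hX3 : ∀ p : Nat.Primes, ((p:ℕ):ℂ)^(-3*w) = (((p:ℕ):ℂ)^(-w))^3 := fun p => by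
    rw [show (-3*w : ℂ) = ((3:ℕ):ℂ)*(-w) by push_cast; ring, Complex.cpow_nat_mul]
  -- multipliability of the Q factors
  have hQ1m : Multipliable Q1f := by
    have hm := mult_one_add (fun p : Nat.Primes => if χ ((p:ℕ) : ZMod q) = 1 then
        -(3 * ((p:ℕ):ℂ)^(-2*w)) + 2*((p:ℕ):ℂ)^(-3*w) else 0) ?_ ?_
    · apply (multipliable_congr (fun p => ?_)).mp hm
      simp only [hQ1fdef]
      by_cases h : χ ((p:ℕ) : ZMod q) = 1
      · rw [if_pos h, if_pos h]; ring
      · rw [if_neg h, if_neg h]; ring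
    · apply Summable.of_norm_bounded (g := fun p : Nat.Primes => 5 * ((p:ℕ):ℝ)^(-(2*w.re)))
        ((summable_primes_rpow (by linarith)).mul_left 5)
      intro p
      have hn2 : ‖((p:ℕ):ℂ)^(-2*w)‖ = ((p:ℕ):ℝ)^(-(2*w.re)) := by
        rw [norm_natCast_cpow_of_pos p.prop.pos]
        congr 1
        simp [neg_re, mul_re]
      have hn3 : ‖((p:ℕ):ℂ)^(-3*w)‖ ≤ ((p:ℕ):ℝ)^(-(2*w.re)) := by
        rw [norm_natCast_cpow_of_pos p.prop.pos]
        apply Real.rpow_le_rpow_of_exponent_le (by exact_mod_cast p.prop.one_lt.le)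
        simp [neg_re, mul_re]
        nlinarith [hσ]
      by_cases h : χ ((p:ℕ) : ZMod q) = 1
      · rw [if_pos h]
        calc ‖-(3 * ((p:ℕ):ℂ)^(-2*w)) + 2*((p:ℕ):ℂ)^(-3*w)‖
            ≤ ‖-(3 * ((p:ℕ):ℂ)^(-2*w))‖ + ‖2*((p:ℕ):ℂ)^(-3*w)‖ := norm_add_le _ _
          _ ≤ 3 * ((p:ℕ):ℝ)^(-(2*w.re)) + 2 * ((p:ℕ):ℝ)^(-(2*w.re)) := by
              rw [norm_neg, norm_mul, norm_mul]
              have e3 : ‖(3:ℂ)‖ = 3 := by norm_num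
              have e2 : ‖(2:ℂ)‖ = 2 := by norm_num
              rw [e3, e2, hn2]
              gcongr
          _ = 5 * ((p:ℕ):ℝ)^(-(2*w.re)) := by ring
      · rw [if_neg h]
        simp only [norm_zero]
        positivity
    · intro p
      apply one_add_ne_zero'
      by_cases h : χ ((p:ℕ) : ZMod q) = 1
      · rw [if_pos h]
        have ha := hxhalf p
        have ha0 : (0:ℝ) ≤ ‖((p:ℕ):ℂ)^(-w)‖ := norm_nonneg _
        calc ‖-(3 * ((p:ℕ):ℂ)^(-2*w)) + 2*((p:ℕ):ℂ)^(-3*w)‖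
            ≤ ‖-(3 * ((p:ℕ):ℂ)^(-2*w))‖ + ‖2*((p:ℕ):ℂ)^(-3*w)‖ := norm_add_le _ _
          _ = 3 * ‖((p:ℕ):ℂ)^(-w)‖^2 + 2 * ‖((p:ℕ):ℂ)^(-w)‖^3 := by
              rw [norm_neg, norm_mul, norm_mul, hX2 p, hX3 p, norm_pow, norm_pow]
              norm_num
          _ < 1 := by nlinarith
      · rw [if_neg h]
        simp only [norm_zero]
        norm_num
  have hQ2m : Multipliable Q2f := by
    have hm := mult_one_add (fun p : Nat.Primes => if χ ((p:ℕ) : ZMod q) = -1 then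
        -(((p:ℕ):ℂ)^(-2*w)) else 0) ?_ ?_
    · apply (multipliable_congr (fun p => ?_)).mp hm
      simp only [hQ2fdef]
      by_cases h : χ ((p:ℕ) : ZMod q) = -1
      · rw [if_pos h, if_pos h]; ring
      · rw [if_neg h, if_neg h]; ring
    · apply Summable.of_norm_bounded (g := fun p : Nat.Primes => ((p:ℕ):ℝ)^(-(2*w.re)))
        (summable_primes_rpow (by linarith))
      intro p
      have hn2 : ‖((p:ℕ):ℂ)^(-2*w)‖ = ((p:ℕ):ℝ)^(-(2*w.re)) := by
        rw [norm_natCast_cpow_of_pos p.prop.pos]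
        congr 1
        simp [neg_re, mul_re]
      by_cases h : χ ((p:ℕ) : ZMod q) = -1
      · rw [if_pos h, norm_neg, hn2]
      · rw [if_neg h]
        simp only [norm_zero]
        positivity
    · intro p
      apply one_add_ne_zero'
      by_cases h : χ ((p:ℕ) : ZMod q) = -1
      · rw [if_pos h, norm_neg, hX2 p, norm_pow]
        have ha := hxhalf p
        have ha0 : (0:ℝ) ≤ ‖((p:ℕ):ℂ)^(-w)‖ := norm_nonneg _
        nlinarith
      · rw [if_neg h]
        simp only [norm_zero]
        norm_num
  have hQ3m : Multipliable Q3f := by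
    have hm := mult_one_add (fun p : Nat.Primes => if (p:ℕ) ∣ q then
        -(((p:ℕ):ℂ)^(-w)) else 0) ?_ ?_
    · apply (multipliable_congr (fun p => ?_)).mp hm
      simp only [hQ3fdef]
      by_cases h : (p:ℕ) ∣ q
      · rw [if_pos h, if_pos h]; ring
      · rw [if_neg h, if_neg h]; ring
    · apply Summable.of_norm_bounded (g := fun p : Nat.Primes => ((p:ℕ):ℝ)^(-w.re))
        (summable_primes_rpow (by linarith))
      intro p
      have hn1 : ‖((p:ℕ):ℂ)^(-w)‖ = ((p:ℕ):ℝ)^(-w.re) := by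
        rw [norm_natCast_cpow_of_pos p.prop.pos, neg_re]
      by_cases h : (p:ℕ) ∣ q
      · rw [if_pos h, norm_neg, hn1]
      · rw [if_neg h]
        simp only [norm_zero]
        positivity
    · intro p
      apply one_add_ne_zero'
      by_cases h : (p:ℕ) ∣ q
      · rw [if_pos h, norm_neg]
        have := hxhalf p
        linarith
      · rw [if_neg h]
        simp only [norm_zero]
        norm_num
  -- the finite product
  have hPf : HasProd Pf (Prt χ r t w) := by
    classical
    have hprime : ∀ a : {x // x ∈ S}, (a.1).Prime := fun a =>
      Nat.prime_of_mem_primeFactors (Finset.mem_filter.mp a.2).1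
    let emb : {x // x ∈ S} ↪ Nat.Primes :=
      ⟨fun a => ⟨a.1, hprime a⟩, fun a b hab =>
        Subtype.ext (congrArg (fun x : Nat.Primes => x.1) hab)⟩
    let sfin : Finset Nat.Primes := S.attach.map emb
    have hmem : ∀ p : Nat.Primes, p ∈ sfin ↔ (p:ℕ) ∈ S := by
      intro p
      constructor
      · intro hp
        rcases Finset.mem_map.mp hp with ⟨a, _, rfl⟩
        exact a.2
      · intro hp
        exact Finset.mem_map.mpr ⟨⟨(p:ℕ), hp⟩, Finset.mem_attach _ _, by
          cases p; rfl⟩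
    have h1 : ∀ p ∉ sfin, Pf p = 1 := by
      intro p hp
      rw [hPfdef]
      exact if_neg (fun hc => hp ((hmem p).mpr hc))
    have h2 : ∏ p ∈ sfin, Pf p = Prt χ r t w := by
      rw [Finset.prod_map, Prt, ← hSdef,
        ← Finset.prod_attach S (fun p => (1 + 2 * (pseudoCharAt r p : ℂ) *
          (pseudoCharAt t p : ℂ) * (p : ℂ) ^ (-w)) / (1 + 2 * (p : ℂ) ^ (-w)))]
      refine Finset.prod_congr rfl fun a _ => ?_
      rw [hPfdef]
      simp only [emb, Function.Embedding.coeFn_mk]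
      exact if_pos a.2
    rw [← h2]
    exact hasProd_prod_of_ne_finset_one h1
  -- the key local identity
  have hkey : ∀ p : Nat.Primes, (∑' e : ℕ, g ((p:ℕ)^e)) =
      Zf p * Lf p * Q1f p * Q2f p * Q3f p * Pf p := by
    intro p
    have hp : ((p:ℕ)).Prime := p.prop
    have hts : (∑' e : ℕ, g ((p:ℕ)^e)) = 1 + g (p:ℕ) := by
      rw [tsum_eq_sum (s := ({0,1} : Finset ℕ)) ?_]
      · rw [Finset.sum_pair (by norm_num : (0:ℕ) ≠ 1), pow_zero, pow_one, hg1]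
      · intro e he
        simp only [Finset.mem_insert, Finset.mem_singleton, not_or] at he
        have h2e : 2 ≤ e := by omega
        have hnsq : ¬ Squarefree ((p:ℕ)^e) := by
          intro hsq
          refine hp.not_isUnit (hsq (p:ℕ) ?_)
          calc (p:ℕ)*(p:ℕ) = (p:ℕ)^2 := (sq _).symm
            _ ∣ (p:ℕ)^e := pow_dvd_pow _ h2e
        have hz : μ ((p:ℕ)^e) = 0 :=
          ArithmeticFunction.moebius_eq_zero_of_not_squarefree hnsq
        simp [hgdef, hz]
    rw [hts]
    have hXnorm : ‖((p:ℕ):ℂ)^(-w)‖ < 1/2 := hxhalf p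
    have hXpos : (0:ℝ) ≤ ‖((p:ℕ):ℂ)^(-w)‖ := norm_nonneg _
    have hx1 : (1:ℂ) - ((p:ℕ):ℂ)^(-w) ≠ 0 := by
      have := one_add_ne_zero' (z := -(((p:ℕ):ℂ)^(-w))) (by rw [norm_neg]; linarith)
      simpa [sub_eq_add_neg] using this
    have hx2 : (1:ℂ) + ((p:ℕ):ℂ)^(-w) ≠ 0 := one_add_ne_zero' (by linarith)
    have hx3 : (1:ℂ) + 2*(((p:ℕ):ℂ)^(-w)) ≠ 0 := by
      apply one_add_ne_zero'
      rw [norm_mul]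
      have e2 : ‖(2:ℂ)‖ = 2 := by norm_num
      rw [e2]
      linarith
    have hμp : ((μ (p:ℕ) : ℂ))^2 = 1 := by
      rw [ArithmeticFunction.moebius_apply_prime hp]
      norm_num
    have hdiv : ∑ d ∈ (p:ℕ).divisors, χ (d : ZMod q) = 1 + χ ((p:ℕ) : ZMod q) := by
      rw [Nat.Prime.divisors hp, Finset.sum_pair hp.one_lt.ne, Nat.cast_one, map_one]
    have hgp : g (p:ℕ) = ((1 : DirichletCharacter ℂ q) ((p:ℕ) : ZMod q)) *
        (1 + χ ((p:ℕ) : ZMod q)) * (pseudoCharAt r (p:ℕ) : ℂ) *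
        (pseudoCharAt t (p:ℕ) : ℂ) * ((p:ℕ):ℂ)^(-w) := by
      rw [hgdef]
      simp only
      rw [hμp, hdiv, one_mul]
    by_cases hdq : (p:ℕ) ∣ q
    · have hnu : ¬ IsUnit ((p:ℕ) : ZMod q) := by
        rw [ZMod.isUnit_iff_coprime]
        exact fun hc => (Nat.Prime.coprime_iff_not_dvd hp).mp hc hdq
      have hc0 : χ ((p:ℕ) : ZMod q) = 0 := χ.map_nonunit hnu
      have h10 : (1 : DirichletCharacter ℂ q) ((p:ℕ) : ZMod q) = 0 :=
        MulChar.map_nonunit _ hnu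
      have hPv : Pf p = 1 := by
        rw [hPfdef]
        refine if_neg (fun hc => ?_)
        rw [hSdef, Finset.mem_filter] at hc
        rw [hc0] at hc
        exact zero_ne_one hc.2
      rw [hgp, h10, hZfdef, hLfdef, hQ1fdef, hQ2fdef, hQ3fdef, hPv]
      simp only
      rw [hc0, if_neg (zero_ne_one (α := ℂ)), if_neg (by norm_num : (0:ℂ) ≠ -1), if_pos hdq]
      field_simp [hx1]
      ring
    · have hu : IsUnit ((p:ℕ) : ZMod q) := by
        rw [ZMod.isUnit_iff_coprime]
        exact (Nat.Prime.coprime_iff_not_dvd hp).mpr hdq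
      have h11 : (1 : DirichletCharacter ℂ q) ((p:ℕ) : ZMod q) = 1 := MulChar.one_apply hu
      have hnorm1 : ‖χ ((p:ℕ) : ZMod q)‖ = 1 := by
        have := χ.unit_norm_eq_one hu.unit
        rwa [IsUnit.unit_spec] at this
      have him : (χ ((p:ℕ) : ZMod q)).im = 0 := hreal (p:ℕ)
      have hcases : χ ((p:ℕ) : ZMod q) = 1 ∨ χ ((p:ℕ) : ZMod q) = -1 := by
        have hre : χ ((p:ℕ) : ZMod q) = ((χ ((p:ℕ) : ZMod q)).re : ℂ) :=
          Complex.ext rfl (by simp [him])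
        rw [hre, Complex.norm_real, Real.norm_eq_abs] at hnorm1
        rcases (abs_eq (by norm_num : (0:ℝ) ≤ 1)).mp hnorm1 with h | h
        · left; rw [hre, h]; norm_num
        · right; rw [hre, h]; norm_num
      rcases hcases with hc1 | hc1
      · by_cases hdrt : (p:ℕ) ∣ r*t
        · have hmemS : (p:ℕ) ∈ S := by
            rw [hSdef, Finset.mem_filter]
            exact ⟨Nat.mem_primeFactors.mpr ⟨hp, hdrt, Nat.mul_ne_zero hr.ne' ht.ne'⟩, hc1⟩
          rw [hgp, h11, hc1, hZfdef, hLfdef, hQ1fdef, hQ2fdef, hQ3fdef, hPfdef]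
          simp only
          rw [hc1, if_pos rfl, if_neg (by norm_num : (1:ℂ) ≠ -1), if_neg hdq, if_pos hmemS,
            hX2 p, hX3 p]
          field_simp [hx1, hx3]
          rw [eq_div_iff (by rwa [mul_comm])]
          ring
        · have hnr : ¬ (p:ℕ) ∣ r := fun h => hdrt (h.mul_right t)
          have hnt : ¬ (p:ℕ) ∣ t := fun h => hdrt (h.mul_left r)
          have hFr : pseudoCharAt r (p:ℕ) = 1 := pseudoCharAt_eq_one_of_not_dvd hp hnr
          have hFt : pseudoCharAt t (p:ℕ) = 1 := pseudoCharAt_eq_one_of_not_dvd hp hnt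
          have hPv : Pf p = 1 := by
            rw [hPfdef]
            refine if_neg (fun hc => ?_)
            rw [hSdef, Finset.mem_filter] at hc
            exact hdrt (Nat.mem_primeFactors.mp hc.1).2.1
          rw [hgp, h11, hc1, hFr, hFt, hZfdef, hLfdef, hQ1fdef, hQ2fdef, hQ3fdef, hPv]
          simp only
          rw [hc1, if_pos rfl, if_neg (by norm_num : (1:ℂ) ≠ -1), if_neg hdq,
            hX2 p, hX3 p, Complex.ofReal_one]
          field_simp [hx1]
          ring
      · have hPv : Pf p = 1 := by
          rw [hPfdef]
          refine if_neg (fun hc => ?_)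
          rw [hSdef, Finset.mem_filter] at hc
          rw [hc1] at hc
          norm_num at hc
        rw [hgp, h11, hc1, hZfdef, hLfdef, hQ1fdef, hQ2fdef, hQ3fdef, hPv]
        simp only
        rw [hc1, if_neg (by norm_num : (-1:ℂ) ≠ 1), if_pos rfl, if_neg hdq, hX2 p]
        rw [show (1:ℂ) - (-1)*(((p:ℕ):ℂ)^(-w)) = 1 + ((p:ℕ):ℂ)^(-w) from by ring]
        field_simp [hx1, hx2]
        ring
  -- assemble
  have hZ : HasProd Zf (riemannZeta w) := riemannZeta_eulerProduct_hasProd hw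
  have hL : HasProd Lf (LSeries (fun n => χ n) w) :=
    DirichletCharacter.LSeries_eulerProduct_hasProd χ hw
  have H : HasProd (fun p => Zf p * Lf p * Q1f p * Q2f p * Q3f p * Pf p)
      (riemannZeta w * LSeries (fun n => χ n) w * (∏' p, Q1f p) * (∏' p, Q2f p) *
        (∏' p, Q3f p) * Prt χ r t w) :=
    ((((hZ.mul hL).mul hQ1m.hasProd).mul hQ2m.hasProd).mul hQ3m.hasProd).mul hPf
  have hG2 : HasProd (fun p => Zf p * Lf p * Q1f p * Q2f p * Q3f p * Pf p) (∑' n, g n) := by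
    rwa [show (fun p => Zf p * Lf p * Q1f p * Q2f p * Q3f p * Pf p) =
      (fun p : Nat.Primes => ∑' e : ℕ, g ((p : ℕ) ^ e)) from (funext hkey).symm]
  rw [hG2.unique H, DirichletCharacter.LFunction_eq_LSeries χ hw, Qfun]
  ring
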